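/- Suppose the period τ is odd. Then ∏_{m=0}^{2τ−1} (√N + P_{m+1})/Q_{m+1} = p_{2τ−1} + q_{2τ−1}√N. Consequently, setting ω = ∏_{m=0}^{2τ−1} (√N + P_{m+1}) and ω̄ = ∏_{m=0}^{2τ−1} (−√N + P_{m+1}), one has ω/ω̄ = (p_{2τ−1} + q_{2τ−1}√N)². -/

import Mathlib

theorem stmt_13
    (N : ℕ) (hN : 0 < N) (hNsq : ¬ IsSquare N)
    (a P Q : ℤ → ℤ)
    (hP0 : P 0 = 0) (hQ0 : Q 0 = 1)
    (ha : ∀ m : ℤ, 0 ≤ m → a m = ⌊((P m : ℝ) + Real.sqrt N) / (Q m : ℝ)⌋)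
    (hPrec : ∀ m : ℤ, 0 ≤ m → P (m + 1) = a m * Q m - P m)
    (hQrec : ∀ m : ℤ, 0 ≤ m → Q (m + 1) * Q m = (N : ℤ) - P (m + 1) ^ 2)
    (τ : ℕ) (hτ : 0 < τ)
    (hper : ∀ n : ℤ, 1 ≤ n → a (n + τ) = a n)
    (hmin : ∀ τ' : ℕ, 0 < τ' → (∀ n : ℤ, 1 ≤ n → a (n + τ') = a n) → τ ≤ τ')
    (p q : ℤ → ℤ)
    (hp1 : p (-1) = 1) (hp0 : p 0 = a 0)
    (hq1 : q (-1) = 0) (hq0 : q 0 = 1)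
    (hprec : ∀ m : ℤ, 1 ≤ m → p m = a m * p (m - 1) + p (m - 2))
    (hqrec : ∀ m : ℤ, 1 ≤ m → q m = a m * q (m - 1) + q (m - 2))
    (hτodd : Odd τ)
    :
    (∏ m ∈ Finset.range (2 * τ),
        (Real.sqrt N + (P ((m : ℤ) + 1) : ℝ)) / (Q ((m : ℤ) + 1) : ℝ))
        = (p (2 * (τ : ℤ) - 1) : ℝ) + (q (2 * (τ : ℤ) - 1) : ℝ) * Real.sqrt N
      ∧ (∏ m ∈ Finset.range (2 * τ), (Real.sqrt N + (P ((m : ℤ) + 1) : ℝ)))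
          / (∏ m ∈ Finset.range (2 * τ), (-Real.sqrt N + (P ((m : ℤ) + 1) : ℝ)))
        = ((p (2 * (τ : ℤ) - 1) : ℝ) + (q (2 * (τ : ℤ) - 1) : ℝ) * Real.sqrt N) ^ 2 := by
  clear hmin hτodd hN
  have hτ1 : 1 ≤ (τ : ℤ) := by exact_mod_cast hτ
  set s : ℝ := Real.sqrt N with hsdef
  have hs2 : s ^ 2 = (N : ℝ) := Real.sq_sqrt (by positivity)
  have hsirr : Irrational s := irrational_sqrt_natCast_iff.mpr hNsq
  -- s is not a ratio of integers
  have hsrat : ∀ j k : ℤ, k ≠ 0 → (k : ℝ) * s ≠ (j : ℝ) := by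
    intro j k hk h
    apply hsirr
    refine ⟨(j : ℚ) / (k : ℚ), ?_⟩
    have hk' : (k : ℝ) ≠ 0 := Int.cast_ne_zero.mpr hk
    push_cast
    rw [div_eq_iff hk']
    linarith [h]
  have hsint : ∀ j : ℤ, s ≠ (j : ℝ) := by
    intro j h
    exact hsrat j 1 one_ne_zero (by rw [Int.cast_one, one_mul]; exact h)
  have hN2 : 2 ≤ N := by
    by_contra h
    interval_cases N
    · exact hNsq ⟨0, rfl⟩
    · exact hNsq ⟨1, rfl⟩
  have hs1 : 1 < s := by
    have : Real.sqrt 1 < Real.sqrt N := by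
      apply Real.sqrt_lt_sqrt (by norm_num)
      exact_mod_cast hN2
    simpa using this
  -- Q m is never zero
  have hQne : ∀ m : ℤ, 0 ≤ m → Q m ≠ 0 := by
    refine Int.le_induction ?_ ?_
    · rw [hQ0]; exact one_ne_zero
    · intro n hn ih h
      have h2 := hQrec n hn
      rw [h, zero_mul] at h2
      exact hNsq (Int.isSquare_natCast_iff.mp ⟨P (n + 1), by rw [← sq]; linarith⟩)
  have hQR : ∀ m : ℤ, 0 ≤ m → ((Q (m+1) : ℝ)) * (Q m : ℝ) = (N : ℝ) - (P (m+1) : ℝ)^2 := by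
    intro m hm
    exact_mod_cast congrArg (fun z : ℤ => (z : ℝ)) (hQrec m hm)
  have hPR : ∀ m : ℤ, 0 ≤ m → ((P (m+1) : ℝ)) = (a m : ℝ) * (Q m : ℝ) - (P m : ℝ) := by
    intro m hm
    exact_mod_cast congrArg (fun z : ℤ => (z : ℝ)) (hPrec m hm)
  have hQcast : ∀ m : ℤ, 0 ≤ m → ((Q m : ℝ)) ≠ 0 := fun m hm => Int.cast_ne_zero.mpr (hQne m hm)
  set x : ℤ → ℝ := fun m => ((P m : ℝ) + s) / (Q m : ℝ) with hxdef
  set z : ℤ → ℝ := fun m => ((P m : ℝ) - s) / (Q m : ℝ) with hzdef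
  -- the key recurrences
  have key : ∀ m : ℤ, 0 ≤ m → (x m - (a m : ℝ)) * x (m+1) = 1 := by
    intro m hm
    have h1 := hQR m hm
    have h2 := hPR m hm
    have hq0' := hQcast m hm
    have hq1' := hQcast (m+1) (by omega)
    show (((P m : ℝ) + s) / (Q m : ℝ) - (a m : ℝ)) * (((P (m+1) : ℝ) + s) / (Q (m+1) : ℝ)) = 1
    field_simp
    linear_combination (((P (m+1) : ℝ)) + s) * h2 + hs2 - h1
  have keyz : ∀ m : ℤ, 0 ≤ m → (z m - (a m : ℝ)) * z (m+1) = 1 := by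
    intro m hm
    have h1 := hQR m hm
    have h2 := hPR m hm
    have hq0' := hQcast m hm
    have hq1' := hQcast (m+1) (by omega)
    show (((P m : ℝ) - s) / (Q m : ℝ) - (a m : ℝ)) * (((P (m+1) : ℝ) - s) / (Q (m+1) : ℝ)) = 1
    field_simp
    linear_combination (((P (m+1) : ℝ)) - s) * h2 + hs2 - h1
  -- floor facts
  have hfloor : ∀ m : ℤ, 0 ≤ m → 0 < x m - (a m : ℝ) ∧ x m - (a m : ℝ) < 1 := by
    intro m hm
    have haf : a m = ⌊x m⌋ := ha m hm
    have h1 : (a m : ℝ) ≤ x m := by rw [haf]; exact Int.floor_le _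
    have h2 : x m < (a m : ℝ) + 1 := by rw [haf]; exact Int.lt_floor_add_one _
    have h3 : x m ≠ (a m : ℝ) := by
      intro h
      apply hsint (a m * Q m - P m)
      have hq' := hQcast m hm
      have h4 : ((P m : ℝ) + s) / (Q m : ℝ) = (a m : ℝ) := h
      field_simp at h4
      push_cast
      linarith
    have h4 : (a m : ℝ) < x m := lt_of_le_of_ne h1 (fun h => h3 h.symm)
    exact ⟨by linarith, by linarith⟩
  have hx1 : ∀ m : ℤ, 0 ≤ m → 1 < x (m+1) := by
    intro m hm
    have hk := key m hm
    obtain ⟨h1, h2⟩ := hfloor m hm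
    nlinarith
  have hx1' : ∀ m : ℤ, 1 ≤ m → 1 < x m := by
    intro m hm
    have := hx1 (m-1) (by omega)
    simpa using this
  have ha1 : ∀ m : ℤ, 1 ≤ m → (1 : ℝ) ≤ (a m : ℝ) := by
    intro m hm
    have h := hx1' m hm
    obtain ⟨h1, h2⟩ := hfloor m (by omega)
    have h3 : (0 : ℝ) < (a m : ℝ) := by linarith
    have h4 : 0 < a m := by exact_mod_cast h3
    exact_mod_cast h4
  have hpair : ∀ m : ℤ, 1 ≤ m → 2 ≤ x m * x (m+1) := by
    intro m hm
    have hk := key m (by omega)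
    have h1 := ha1 m hm
    have h2 := hx1 m (by omega)
    nlinarith
  -- contraction step
  have hstep2 : ∀ m : ℤ, 1 ≤ m →
      |x m - x (m + τ)| * (x (m+1) * x (m+1+τ)) = |x (m+1) - x (m+1+τ)| := by
    intro m hm
    have k1 := key m (by omega)
    have k2 := key (m + τ) (by omega)
    rw [hper m hm] at k2
    have hidx : m + (τ:ℤ) + 1 = m + 1 + τ := by ring
    rw [hidx] at k2
    have hp1 : (0:ℝ) < x (m+1) := by linarith [hx1 m (by omega)]
    have hp2 : (0:ℝ) < x (m+1+τ) := by linarith [hx1' (m+1+τ) (by omega)]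
    have E1 : (x m - x (m + τ)) * (x (m+1) * x (m+1+τ)) = x (m+1+τ) - x (m+1) := by
      linear_combination x (m+1+τ) * k1 - x (m+1) * k2
    rw [← abs_of_pos (mul_pos hp1 hp2), ← abs_mul, E1, abs_sub_comm]
  -- iterated contraction
  have hiter : ∀ j : ℕ, |x 1 - x (1 + τ)| *
      (∏ m ∈ Finset.range j, (x ((m:ℤ)+2) * x ((m:ℤ)+2+τ)))
      = |x ((j:ℤ)+1) - x ((j:ℤ)+1+τ)| := by
    intro j
    induction j with
    | zero => simp
    | succ j ih =>
      rw [Finset.prod_range_succ, ← mul_assoc, ih]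
      have h := hstep2 ((j:ℤ)+1) (by omega)
      have e1 : (j:ℤ)+1+1 = (j:ℤ)+2 := by ring
      rw [e1] at h
      push_cast
      rw [e1]
      exact h
  -- lower bound for the product
  have hGk : ∀ k : ℕ, (4:ℝ)^k ≤ ∏ m ∈ Finset.range (2*k), (x ((m:ℤ)+2) * x ((m:ℤ)+2+τ)) := by
    intro k
    induction k with
    | zero => simp
    | succ k ih =>
      have hA := hpair (2*(k:ℤ)+2) (by omega)
      have hB := hpair (2*(k:ℤ)+2+τ) (by omega)
      have hxApos : (0:ℝ) < x (2*(k:ℤ)+2) := by linarith [hx1' (2*(k:ℤ)+2) (by omega)]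
      have hxBpos : (0:ℝ) < x (2*(k:ℤ)+2+τ) := by linarith [hx1' (2*(k:ℤ)+2+τ) (by omega)]
      have hxA1pos : (0:ℝ) < x (2*(k:ℤ)+3) := by linarith [hx1' (2*(k:ℤ)+3) (by omega)]
      have hxB1pos : (0:ℝ) < x (2*(k:ℤ)+3+τ) := by linarith [hx1' (2*(k:ℤ)+3+τ) (by omega)]
      have eA : (2*(k:ℤ)+2) + 1 = 2*(k:ℤ)+3 := by ring
      have eB : (2*(k:ℤ)+2+τ) + 1 = 2*(k:ℤ)+3+(τ:ℤ) := by ring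
      rw [eA] at hA
      rw [eB] at hB
      have hPPos : (0:ℝ) < ∏ m ∈ Finset.range (2*k), (x ((m:ℤ)+2) * x ((m:ℤ)+2+τ)) := by
        apply Finset.prod_pos
        intro i _
        exact mul_pos (by linarith [hx1' ((i:ℤ)+2) (by omega)])
          (by linarith [hx1' ((i:ℤ)+2+τ) (by omega)])
      have hsplit : (2*(k+1)) = (2*k) + 1 + 1 := by ring
      rw [hsplit, Finset.prod_range_succ, Finset.prod_range_succ]
      have e4 : ((2*k:ℕ):ℤ) + 2 = 2*(k:ℤ)+2 := by push_cast; ring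
      have e5 : ((2*k+1:ℕ):ℤ) + 2 = 2*(k:ℤ)+3 := by push_cast; ring
      rw [e4, e5]
      have h4 : (4:ℝ) ≤ (x (2*(k:ℤ)+2) * x (2*(k:ℤ)+2+τ)) *
          (x (2*(k:ℤ)+3) * x (2*(k:ℤ)+3+τ)) := by nlinarith
      calc (4:ℝ)^(k+1) = 4^k * 4 := by ring
        _ ≤ (∏ m ∈ Finset.range (2*k), (x ((m:ℤ)+2) * x ((m:ℤ)+2+τ))) *
            ((x (2*(k:ℤ)+2) * x (2*(k:ℤ)+2+τ)) * (x (2*(k:ℤ)+3) * x (2*(k:ℤ)+3+τ))) :=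
          mul_le_mul ih h4 (by norm_num) hPPos.le
        _ = _ := by ring
  -- x is periodic at index 1
  have hxeq : x 1 = x (1 + τ) := by
    by_contra hne
    have hdpos : 0 < |x 1 - x (1+(τ:ℤ))| := abs_pos.mpr (sub_ne_zero.mpr hne)
    obtain ⟨k, hk⟩ := pow_unbounded_of_one_lt (|x 1 - x (1+(τ:ℤ))|⁻¹) (by norm_num : (1:ℝ) < 4)
    have h1 := hiter (2*k)
    have h2 := hGk k
    set m0 : ℤ := ((2*k : ℕ):ℤ) + 1 with hm0
    have hm01 : 1 ≤ m0 := by omega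
    obtain ⟨hfa1, hfa2⟩ := hfloor m0 (by omega)
    obtain ⟨hfb1, hfb2⟩ := hfloor (m0 + τ) (by omega)
    rw [hper m0 hm01] at hfb1 hfb2
    have h3 : |x m0 - x (m0 + τ)| ≤ 1 := abs_le.mpr ⟨by linarith, by linarith⟩
    have h4 : |x 1 - x (1+(τ:ℤ))| * 4^k ≤ 1 := by
      calc |x 1 - x (1+(τ:ℤ))| * 4^k
          ≤ |x 1 - x (1+(τ:ℤ))| * ∏ m ∈ Finset.range (2*k), (x ((m:ℤ)+2) * x ((m:ℤ)+2+τ)) :=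
            mul_le_mul_of_nonneg_left h2 (abs_nonneg _)
        _ = |x m0 - x (m0 + τ)| := h1
        _ ≤ 1 := h3
    have h5 : (1:ℝ) < |x 1 - x (1+(τ:ℤ))| * 4^k := by
      have h6 := mul_lt_mul_of_pos_left hk hdpos
      rw [mul_inv_cancel₀ (ne_of_gt hdpos)] at h6
      exact h6
    linarith
  -- deduce periodicity of P and Q
  have hxeq' : ((P 1 : ℝ) + s) * (Q (1+(τ:ℤ)) : ℝ) = ((P (1+(τ:ℤ)) : ℝ) + s) * (Q 1 : ℝ) := by
    have h1 := hQcast 1 (by omega)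
    have h2 := hQcast (1+(τ:ℤ)) (by omega)
    have h := hxeq
    simp only [hxdef] at h
    exact (div_eq_div_iff h1 h2).mp h
  have hQ1τ : Q (1 + (τ:ℤ)) = Q 1 := by
    by_contra hne
    apply hsrat (P (1+(τ:ℤ)) * Q 1 - P 1 * Q (1+(τ:ℤ))) (Q (1+(τ:ℤ)) - Q 1) (by omega)
    push_cast
    linear_combination hxeq'
  have hP1τ : P (1 + (τ:ℤ)) = P 1 := by
    have h1 : (Q 1 : ℝ) ≠ 0 := hQcast 1 (by omega)
    have hq : ((Q (1+(τ:ℤ)) : ℝ)) = (Q 1 : ℝ) := by exact_mod_cast congrArg (fun t : ℤ => (t:ℝ)) hQ1τ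
    have h := hxeq'
    rw [hq] at h
    have h2 := mul_right_cancel₀ h1 h
    have : ((P (1+(τ:ℤ)) : ℝ)) = (P 1 : ℝ) := by linarith
    exact_mod_cast this
  have hPQ : ∀ m : ℤ, 1 ≤ m → P (m + τ) = P m ∧ Q (m + τ) = Q m := by
    refine Int.le_induction ⟨hP1τ, hQ1τ⟩ ?_
    · intro n hn ih
      have e : n + 1 + (τ:ℤ) = (n + τ) + 1 := by ring
      have hPp : P (n + 1 + (τ:ℤ)) = P (n+1) := by
        rw [e, hPrec (n+τ) (by omega), hper n hn, ih.2, ih.1, hPrec n (by omega)]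
      refine ⟨hPp, ?_⟩
      have h1 := hQrec (n+τ) (by omega)
      have h2 := hQrec n (by omega)
      rw [ih.2, ← e, hPp] at h1
      rw [e]
      rw [← e]
      exact mul_right_cancel₀ (hQne n (by omega)) (h1.trans h2.symm)
  have hQτ1 : Q ((τ:ℤ)) = 1 := by
    have h1 := hQrec (τ:ℤ) (by omega)
    have h2 := hQrec 0 (by omega)
    have e : (1:ℤ) + τ = (τ:ℤ) + 1 := by ring
    have hPt : P ((τ:ℤ)+1) = P 1 := by rw [← e]; exact hP1τ
    have hQt : Q ((τ:ℤ)+1) = Q 1 := by rw [← e]; exact hQ1τ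
    rw [hPt, hQt] at h1
    norm_num at h2
    rw [hQ0, mul_one] at h2
    have h3 : Q 1 * Q (τ:ℤ) = Q 1 * 1 := by rw [mul_one]; omega
    exact mul_left_cancel₀ (hQne 1 (by omega)) h3
  have hQ2τ : Q (2*(τ:ℤ)) = 1 := by
    have h := (hPQ (τ:ℤ) (by omega)).2
    rw [show (τ:ℤ) + τ = 2*(τ:ℤ) by ring] at h
    rw [h, hQτ1]
  -- the convergent identities
  have CA : ∀ m : ℤ, 0 ≤ m →
      ((p m : ℝ) - (q m : ℝ) * s) * x (m+1) = -((p (m-1) : ℝ) - (q (m-1) : ℝ) * s) := by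
    refine Int.le_induction ?_ ?_
    ·
      have k0 := key 0 (by omega)
      have hx0 : x 0 = s := by
        show ((P 0 : ℝ) + s) / (Q 0 : ℝ) = s
        rw [hP0, hQ0]
        norm_num
      rw [hx0] at k0
      norm_num at k0
      norm_num [hp0, hq0, hp1, hq1]
      linear_combination -k0
    · intro n hn ih
      have hpn := hprec (n+1) (by omega)
      have hqn := hqrec (n+1) (by omega)
      have e1 : n + 1 - 1 = n := by ring
      have e2 : n + 1 - 2 = n - 1 := by ring
      rw [e1, e2] at hpn hqn
      have k1 := key (n+1) (by omega)
      have hpnR : (p (n+1) : ℝ) = (a (n+1):ℝ) * (p n:ℝ) + (p (n-1):ℝ) := by exact_mod_cast congrArg (fun t : ℤ => (t:ℝ)) hpn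
      have hqnR : (q (n+1) : ℝ) = (a (n+1):ℝ) * (q n:ℝ) + (q (n-1):ℝ) := by exact_mod_cast congrArg (fun t : ℤ => (t:ℝ)) hqn
      rw [e1]
      linear_combination x (n+1+1) * ih - ((p n : ℝ) - (q n : ℝ) * s) * k1 +
        x (n+1+1) * hpnR - s * x (n+1+1) * hqnR
  have CE : ∀ m : ℤ, 0 ≤ m →
      ((p m : ℝ) + (q m : ℝ) * s) * z (m+1) = -((p (m-1) : ℝ) + (q (m-1) : ℝ) * s) := by
    refine Int.le_induction ?_ ?_
    ·
      have k0 := keyz 0 (by omega)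
      have hz0 : z 0 = -s := by
        show ((P 0 : ℝ) - s) / (Q 0 : ℝ) = -s
        rw [hP0, hQ0]
        norm_num
      rw [hz0] at k0
      norm_num at k0
      norm_num [hp0, hq0, hp1, hq1]
      linear_combination -k0
    · intro n hn ih
      have hpn := hprec (n+1) (by omega)
      have hqn := hqrec (n+1) (by omega)
      have e1 : n + 1 - 1 = n := by ring
      have e2 : n + 1 - 2 = n - 1 := by ring
      rw [e1, e2] at hpn hqn
      have k1 := keyz (n+1) (by omega)
      have hpnR : (p (n+1) : ℝ) = (a (n+1):ℝ) * (p n:ℝ) + (p (n-1):ℝ) := by exact_mod_cast congrArg (fun t : ℤ => (t:ℝ)) hpn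
      have hqnR : (q (n+1) : ℝ) = (a (n+1):ℝ) * (q n:ℝ) + (q (n-1):ℝ) := by exact_mod_cast congrArg (fun t : ℤ => (t:ℝ)) hqn
      rw [e1]
      linear_combination z (n+1+1) * ih - ((p n : ℝ) + (q n : ℝ) * s) * k1 +
        z (n+1+1) * hpnR + s * z (n+1+1) * hqnR
  have PL1 : ∀ n : ℕ, ((p (n:ℤ) : ℝ) - (q (n:ℤ) : ℝ) * s) *
      (∏ m ∈ Finset.range (n+1), x ((m:ℤ)+1)) = (-1:ℝ)^(n+1) := by
    intro n
    induction n with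
    | zero =>
      have h := CA 0 le_rfl
      norm_num [hp1, hq1] at h ⊢
      exact h
    | succ n ih =>
      rw [Finset.prod_range_succ]
      have h := CA ((n:ℤ)+1) (by omega)
      have e1 : (n:ℤ) + 1 - 1 = (n:ℤ) := by ring
      rw [e1] at h
      push_cast
      rw [pow_succ]
      linear_combination (∏ m ∈ Finset.range (n+1), x ((m:ℤ)+1)) * h - ih
  have PL2 : ∀ n : ℕ, ((p (n:ℤ) : ℝ) + (q (n:ℤ) : ℝ) * s) *
      (∏ m ∈ Finset.range (n+1), z ((m:ℤ)+1)) = (-1:ℝ)^(n+1) := by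
    intro n
    induction n with
    | zero =>
      have h := CE 0 le_rfl
      norm_num [hp1, hq1] at h ⊢
      exact h
    | succ n ih =>
      rw [Finset.prod_range_succ]
      have h := CE ((n:ℤ)+1) (by omega)
      have e1 : (n:ℤ) + 1 - 1 = (n:ℤ) := by ring
      rw [e1] at h
      push_cast
      rw [pow_succ]
      linear_combination (∏ m ∈ Finset.range (n+1), z ((m:ℤ)+1)) * h - ih
  have hstepQ : ∀ m : ℤ, 0 ≤ m → x (m+1) * z (m+1) * (Q (m+1) : ℝ) = -(Q m : ℝ) := by
    intro m hm
    have h1 := hQR m hm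
    have hq1' := hQcast (m+1) (by omega)
    show (((P (m+1):ℝ) + s)/(Q (m+1):ℝ)) * (((P (m+1):ℝ) - s)/(Q (m+1):ℝ)) * (Q (m+1):ℝ)
        = -(Q m:ℝ)
    field_simp
    linear_combination h1 - hs2
  have PL3 : ∀ n : ℕ, (∏ m ∈ Finset.range (n+1), (x ((m:ℤ)+1) * z ((m:ℤ)+1))) * (Q ((n:ℤ)+1) : ℝ)
      = (-1:ℝ)^(n+1) := by
    intro n
    induction n with
    | zero =>
      have h := hstepQ 0 le_rfl
      norm_num [hQ0] at h ⊢
      exact h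
    | succ n ih =>
      rw [Finset.prod_range_succ]
      have h := hstepQ ((n:ℤ)+1) (by omega)
      push_cast
      rw [pow_succ]
      linear_combination (∏ m ∈ Finset.range (n+1), (x ((m:ℤ)+1) * z ((m:ℤ)+1))) * h - ih
  -- instantiate at n = 2τ-1
  have hn₀1 : (2*τ - 1) + 1 = 2*τ := by omega
  have hn₀c : ((2*τ - 1 : ℕ):ℤ) = 2*(τ:ℤ) - 1 := by omega
  have h1 := PL1 (2*τ - 1)
  have h2 := PL2 (2*τ - 1)
  have h3 := PL3 (2*τ - 1)
  rw [hn₀1, hn₀c] at h1 h2 h3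
  have e : 2*(τ:ℤ) - 1 + 1 = 2*(τ:ℤ) := by ring
  rw [e, hQ2τ] at h3
  have hpow : (-1:ℝ)^(2*τ) = 1 := by
    rw [pow_mul]
    norm_num
  rw [hpow] at h1 h2 h3
  rw [Int.cast_one, mul_one, Finset.prod_mul_distrib] at h3
  set D : ℝ := (p (2*(τ:ℤ)-1) : ℝ) - (q (2*(τ:ℤ)-1):ℝ) * s with hD
  set E : ℝ := (p (2*(τ:ℤ)-1) : ℝ) + (q (2*(τ:ℤ)-1):ℝ) * s with hE
  set Px : ℝ := ∏ m ∈ Finset.range (2*τ), x ((m:ℤ)+1) with hPxd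
  set Pz : ℝ := ∏ m ∈ Finset.range (2*τ), z ((m:ℤ)+1) with hPzd
  have hDE : D * E = 1 := by
    have h4 : D * E * (Px * Pz) = 1 := by
      rw [show D * E * (Px * Pz) = (D * Px) * (E * Pz) from by ring, h1, h2, one_mul]
    rw [h3, mul_one] at h4
    exact h4
  have hPx : Px = E := by
    calc Px = (D * E) * Px := by rw [hDE, one_mul]
      _ = E * (D * Px) := by ring
      _ = E := by rw [h1, mul_one]
  have hPz : Pz = D := by
    calc Pz = (D * E) * Pz := by rw [hDE, one_mul]
      _ = D * (E * Pz) := by ring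
      _ = D := by rw [h2, mul_one]
  have hDne : D ≠ 0 := by
    intro h
    rw [h, zero_mul] at hDE
    exact zero_ne_one hDE
  constructor
  · have hgoal : ∏ m ∈ Finset.range (2*τ), (s + (P ((m:ℤ)+1):ℝ))/(Q ((m:ℤ)+1):ℝ) = Px := by
      rw [hPxd]
      apply Finset.prod_congr rfl
      intro m _
      show (s + (P ((m:ℤ)+1):ℝ))/(Q ((m:ℤ)+1):ℝ) = ((P ((m:ℤ)+1):ℝ) + s)/(Q ((m:ℤ)+1):ℝ)
      rw [add_comm]
    rw [hgoal, hPx, hE]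
  · have homega : ∏ m ∈ Finset.range (2*τ), (s + (P ((m:ℤ)+1):ℝ))
        = Px * ∏ m ∈ Finset.range (2*τ), (Q ((m:ℤ)+1):ℝ) := by
      rw [hPxd, ← Finset.prod_mul_distrib]
      apply Finset.prod_congr rfl
      intro m _
      show s + (P ((m:ℤ)+1):ℝ) = ((P ((m:ℤ)+1):ℝ) + s)/(Q ((m:ℤ)+1):ℝ) * (Q ((m:ℤ)+1):ℝ)
      rw [div_mul_cancel₀ _ (hQcast ((m:ℤ)+1) (by omega)), add_comm]
    have homegab : ∏ m ∈ Finset.range (2*τ), (-s + (P ((m:ℤ)+1):ℝ))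
        = Pz * ∏ m ∈ Finset.range (2*τ), (Q ((m:ℤ)+1):ℝ) := by
      rw [hPzd, ← Finset.prod_mul_distrib]
      apply Finset.prod_congr rfl
      intro m _
      show -s + (P ((m:ℤ)+1):ℝ) = ((P ((m:ℤ)+1):ℝ) - s)/(Q ((m:ℤ)+1):ℝ) * (Q ((m:ℤ)+1):ℝ)
      rw [div_mul_cancel₀ _ (hQcast ((m:ℤ)+1) (by omega))]
      ring
    have hQprodne : (∏ m ∈ Finset.range (2*τ), (Q ((m:ℤ)+1):ℝ)) ≠ 0 := by
      apply Finset.prod_ne_zero_iff.mpr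
      intro m _
      exact hQcast ((m:ℤ)+1) (by omega)
    rw [homega, homegab, mul_div_mul_right _ _ hQprodne, hPx, hPz]
    rw [div_eq_iff hDne]
    linear_combination (-E) * hDE
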